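/- For every prime p and every multiset J of elements of (ZMod p)^3 with |J| = 7p - 3, there exists a sub-multiset of J of cardinality 3p whose sum is 0. -/

import Mathlib

open Finset MvPolynomial

section Lucas

variable {p : ℕ} [hpf : Fact p.Prime]

-- Lucas corollary: C(k*p, j*p) ≡ C(k,j) mod p
lemma lucas_kp (k j : ℕ) : (((k * p).choose (j * p) : ℕ) : ZMod p) = (k.choose j : ZMod p) := by
  have hp := hpf.out
  have h := Choose.choose_modEq_choose_mod_mul_choose_div (p := p) (n := k * p) (k := j * p)
  have h1 : (k * p) % p = 0 := Nat.mul_mod_left k p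
  have h2 : (k * p) / p = k := Nat.mul_div_cancel k hp.pos
  have h3 : (j * p) % p = 0 := Nat.mul_mod_left j p
  have h4 : (j * p) / p = j := Nat.mul_div_cancel j hp.pos
  rw [h1, h2, h3, h4] at h
  have := (ZMod.intCast_eq_intCast_iff _ _ _).mpr h
  push_cast at this ⊢
  simpa using this

end Lucas

section KL

variable {p : ℕ} [hpf : Fact p.Prime] {σ : Type*} [Fintype σ] [DecidableEq σ]

lemma card_supp_fiber (S : Finset σ) :
    (univ.filter fun x : σ → ZMod p => (univ.filter fun i => x i ≠ 0) = S).card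
      = (p - 1) ^ S.card := by
  classical
  have : (univ.filter fun x : σ → ZMod p => (univ.filter fun i => x i ≠ 0) = S)
      = Fintype.piFinset (fun i => if i ∈ S then (univ : Finset (ZMod p)).erase 0 else {0}) := by
    ext x
    simp only [mem_filter, mem_univ, true_and, Fintype.mem_piFinset, Finset.ext_iff]
    constructor
    · intro h i
      have hi' := h i
      by_cases hi : i ∈ S
      · simp [hi, mem_erase, hi'.mpr hi]
      · have hx0 : x i = 0 := by
          by_contra hx
          exact hi (hi'.mp hx)
        simp [hi, hx0]
    · intro h i
      have hi' := h i
      by_cases hi : i ∈ S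
      · simp only [hi, if_pos] at hi'
        simp [hi, (Finset.mem_erase.mp hi').1]
      · rw [if_neg hi] at hi'
        simp [hi, Finset.mem_singleton.mp hi']
  rw [this, Fintype.card_piFinset]
  have hcard : ∀ i : σ, (if i ∈ S then (univ : Finset (ZMod p)).erase 0 else {0}).card
      = if i ∈ S then p - 1 else 1 := by
    intro i
    by_cases hi : i ∈ S
    · simp [hi, Finset.card_erase_of_mem (mem_univ _), ZMod.card]
    · simp [hi]
  calc ∏ i : σ, (if i ∈ S then (univ : Finset (ZMod p)).erase 0 else {0}).card
      = ∏ i : σ, (if i ∈ S then p - 1 else 1) := Finset.prod_congr rfl fun i _ => hcard i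
    _ = (p - 1) ^ S.card := by
        rw [← Finset.prod_filter_mul_prod_filter_not univ (· ∈ S)]
        have h1 : univ.filter (· ∈ S) = S := Finset.filter_univ_mem S
        have h2 : ∏ i ∈ univ.filter (¬ · ∈ S), (if i ∈ S then p - 1 else 1) = 1 := by
          apply Finset.prod_eq_one
          intro i hi
          simp only [Finset.mem_filter] at hi
          simp [hi.2]
        rw [h2, mul_one, h1]
        rw [Finset.prod_congr rfl (fun i hi => if_pos hi), Finset.prod_const]

end KL
section KL2

open Finset MvPolynomial

variable {p : ℕ} [hpf : Fact p.Prime] {σ : Type*} [Fintype σ] [DecidableEq σ]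

lemma KL (a : σ → Fin 3 → ZMod p) (j : ℕ)
    (hdeg : j * p + 4 * (p - 1) < Fintype.card σ) :
    ∑ S : Finset σ, (if (∑ i ∈ S, a i) = 0 ∧ p ∣ S.card
      then ((-1 : ZMod p)) ^ S.card * ((S.card.choose (j * p) : ℕ) : ZMod p) else 0) = 0 := by
  classical
  have hp := hpf.out
  have hp2 : 2 ≤ p := hp.two_le
  let f : Fin 3 → MvPolynomial σ (ZMod p) := fun c => ∑ i : σ, MvPolynomial.C (a i c) * X i ^ (p - 1)
  let g : MvPolynomial σ (ZMod p) := ∑ i : σ, X i ^ (p - 1)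
  let e : MvPolynomial σ (ZMod p) :=
    ∑ T ∈ powersetCard (j * p) (univ : Finset σ), ∏ i ∈ T, X i ^ (p - 1)
  let F : MvPolynomial σ (ZMod p) := (∏ c : Fin 3, (1 - f c ^ (p - 1))) * ((1 - g ^ (p - 1)) * e)
  have hdX : ∀ i : σ, (X i ^ (p-1) : MvPolynomial σ (ZMod p)).totalDegree ≤ p - 1 := by
    intro i
    refine le_trans (totalDegree_pow _ _) ?_
    rw [totalDegree_X]; omega
  have hone_sub : ∀ (h : MvPolynomial σ (ZMod p)), (1 - h).totalDegree ≤ h.totalDegree := by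
    intro h
    rw [sub_eq_add_neg]
    refine le_trans (totalDegree_add _ _) ?_
    simp [totalDegree_one, totalDegree_neg]
  have hdf : ∀ c, (f c).totalDegree ≤ p - 1 := by
    intro c
    apply totalDegree_finsetSum_le
    intro i _
    refine le_trans (totalDegree_mul _ _) ?_
    rw [totalDegree_C]
    simpa using hdX i
  have hdg : g.totalDegree ≤ p - 1 := totalDegree_finsetSum_le (fun i _ => hdX i)
  have hde : e.totalDegree ≤ j * p * (p - 1) := by
    apply totalDegree_finsetSum_le
    intro T hT
    refine le_trans (totalDegree_finset_prod _ _) ?_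
    calc ∑ i ∈ T, (X i ^ (p-1) : MvPolynomial σ (ZMod p)).totalDegree
        ≤ ∑ i ∈ T, (p - 1) := Finset.sum_le_sum fun i _ => hdX i
      _ = T.card * (p - 1) := by rw [Finset.sum_const, smul_eq_mul]
      _ = j * p * (p - 1) := by rw [(mem_powersetCard.mp hT).2]
  have hFdeg : F.totalDegree < (p - 1) * Fintype.card σ := by
    have h1 : (∏ c : Fin 3, (1 - f c ^ (p - 1))).totalDegree ≤ 3 * ((p-1) * (p-1)) := by
      refine le_trans (totalDegree_finset_prod _ _) ?_
      have : ∀ c : Fin 3, (1 - f c ^ (p-1)).totalDegree ≤ (p-1) * (p-1) := by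
        intro c
        refine le_trans (hone_sub _) (le_trans (totalDegree_pow _ _) ?_)
        exact Nat.mul_le_mul_left _ (hdf c)
      refine le_trans (Finset.sum_le_sum fun c _ => this c) ?_
      simp [Finset.sum_const]
    have h2 : ((1 - g ^ (p - 1)) * e).totalDegree ≤ (p-1) * (p-1) + j * p * (p-1) := by
      refine le_trans (totalDegree_mul _ _) ?_
      exact Nat.add_le_add
        (le_trans (hone_sub _) (le_trans (totalDegree_pow _ _) (Nat.mul_le_mul_left _ hdg))) hde
    refine lt_of_le_of_lt (le_trans (totalDegree_mul _ _) (Nat.add_le_add h1 h2)) ?_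
    have hle : 3 * ((p-1) * (p-1)) + ((p-1) * (p-1) + j * p * (p-1))
        = (4 * (p-1) + j * p) * (p-1) := by ring
    rw [hle]
    have hppos : 0 < p - 1 := by omega
    calc (4 * (p-1) + j * p) * (p-1) < Fintype.card σ * (p-1) := by
          exact (Nat.mul_lt_mul_right hppos).mpr (by omega)
      _ = (p - 1) * Fintype.card σ := Nat.mul_comm _ _
  have hpow : ∀ (x : σ → ZMod p) (i : σ),
      (x i) ^ (p - 1) = if i ∈ (univ.filter fun i => x i ≠ 0) then (1 : ZMod p) else 0 := by
    intro x i
    by_cases h : x i = 0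
    · simp [h, zero_pow (show p - 1 ≠ 0 by omega)]
    · simp [h, ZMod.pow_card_sub_one_eq_one h]
  have hind : ∀ u : ZMod p, 1 - u ^ (p - 1) = if u = 0 then 1 else 0 := by
    intro u
    by_cases h : u = 0
    · simp [h, zero_pow (show p - 1 ≠ 0 by omega)]
    · simp [h, ZMod.pow_card_sub_one_eq_one h]
  have heval : ∀ x : σ → ZMod p, eval x F =
      (if (∑ i ∈ (univ.filter fun i => x i ≠ 0), a i) = 0 ∧ p ∣ (univ.filter fun i => x i ≠ 0).card
       then (((univ.filter fun i => x i ≠ 0).card.choose (j * p) : ℕ) : ZMod p) else 0) := by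
    intro x
    set S : Finset σ := univ.filter fun i => x i ≠ 0 with hS
    have hef : ∀ c, eval x (f c) = ∑ i ∈ S, a i c := by
      intro c
      simp only [f, map_sum, eval_mul, eval_C, eval_pow, eval_X]
      calc ∑ i : σ, a i c * (x i) ^ (p-1)
          = ∑ i : σ, (if i ∈ S then a i c else 0) := by
            refine Finset.sum_congr rfl fun i _ => ?_
            rw [hpow x i]
            split <;> simp
        _ = ∑ i ∈ S, a i c := by rw [Finset.sum_ite_mem, univ_inter]
    have heg : eval x g = (S.card : ZMod p) := by
      simp only [g, map_sum, eval_pow, eval_X]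
      calc ∑ i : σ, (x i)^(p-1)
          = ∑ i : σ, (if i ∈ S then (1 : ZMod p) else 0) :=
            Finset.sum_congr rfl fun i _ => hpow x i
        _ = (S.card : ZMod p) := by
            rw [Finset.sum_ite_mem, univ_inter, Finset.sum_const, nsmul_eq_mul, mul_one]
    have hee : eval x e = ((S.card.choose (j*p) : ℕ) : ZMod p) := by
      simp only [e, map_sum, map_prod, eval_pow, eval_X]
      calc ∑ T ∈ powersetCard (j*p) (univ : Finset σ), ∏ i ∈ T, (x i)^(p-1)
          = ∑ T ∈ powersetCard (j*p) (univ : Finset σ), (if T ⊆ S then (1:ZMod p) else 0) := by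
            refine Finset.sum_congr rfl fun T _ => ?_
            calc ∏ i ∈ T, (x i)^(p-1)
                = ∏ i ∈ T, (if i ∈ S then (1:ZMod p) else 0) :=
                  Finset.prod_congr rfl fun i _ => hpow x i
              _ = if T ⊆ S then 1 else 0 := by
                  by_cases h : T ⊆ S
                  · rw [if_pos h]
                    exact Finset.prod_eq_one fun i hi => if_pos (h hi)
                  · rw [if_neg h]
                    obtain ⟨i, hiT, hiS⟩ := Finset.not_subset.mp h
                    exact Finset.prod_eq_zero hiT (if_neg hiS)
        _ = ((((powersetCard (j*p) (univ : Finset σ)).filter (· ⊆ S)).card : ℕ) : ZMod p) := by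
            rw [Finset.sum_boole]
        _ = ((S.card.choose (j*p) : ℕ) : ZMod p) := by
            congr 1
            rw [show (powersetCard (j*p) (univ : Finset σ)).filter (· ⊆ S)
                  = powersetCard (j*p) S from ?_, Finset.card_powersetCard]
            ext T
            simp only [mem_filter, mem_powersetCard, subset_univ, true_and]
            tauto
    have h3 : eval x (∏ c : Fin 3, (1 - f c ^ (p-1)))
        = if (∑ i ∈ S, a i) = 0 then (1 : ZMod p) else 0 := by
      rw [map_prod]
      calc ∏ c : Fin 3, eval x (1 - f c ^ (p-1))
          = ∏ c : Fin 3, (if (∑ i ∈ S, a i c) = 0 then (1:ZMod p) else 0) := by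
            refine Finset.prod_congr rfl fun c _ => ?_
            rw [map_sub, map_one, map_pow, hef, hind]
        _ = if (∑ i ∈ S, a i) = 0 then (1 : ZMod p) else 0 := by
            have hap : ∀ c : Fin 3, (∑ i ∈ S, a i) c = ∑ i ∈ S, a i c :=
              fun c => Finset.sum_apply c S a
            by_cases h : (∑ i ∈ S, a i) = 0
            · rw [if_pos h]
              refine Finset.prod_eq_one fun c _ => if_pos ?_
              rw [← hap, h]
              rfl
            · rw [if_neg h]
              have hc : ∃ c : Fin 3, (∑ i ∈ S, a i c) ≠ 0 := by
                by_contra hcc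
                push_neg at hcc
                exact h (funext fun c => by rw [hap, hcc c]; rfl)
              obtain ⟨c, hc⟩ := hc
              exact Finset.prod_eq_zero (mem_univ c) (if_neg hc)
    have h4 : eval x (1 - g ^ (p-1)) = if p ∣ S.card then (1 : ZMod p) else 0 := by
      rw [map_sub, map_one, map_pow, heg, hind]
      congr 1
      rw [eq_iff_iff]
      exact (ZMod.natCast_eq_zero_iff _ _)
    show eval x F = _
    rw [eval_mul, eval_mul, h3, h4, hee]
    by_cases h1 : (∑ i ∈ S, a i) = 0 <;> by_cases h2 : p ∣ S.card <;> simp [h1, h2]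
  have hsum0 : ∑ x : σ → ZMod p, eval x F = 0 := by
    apply MvPolynomial.sum_eval_eq_zero
    rwa [ZMod.card]
  have hgroup : ∑ x : σ → ZMod p, eval x F
      = ∑ S : Finset σ, (if (∑ i ∈ S, a i) = 0 ∧ p ∣ S.card
          then ((-1 : ZMod p)) ^ S.card * ((S.card.choose (j * p) : ℕ) : ZMod p) else 0) := by
    rw [← Finset.sum_fiberwise univ (fun x : σ → ZMod p => univ.filter fun i => x i ≠ 0)
        (fun x => eval x F)]
    refine Finset.sum_congr rfl fun S _ => ?_
    calc ∑ x ∈ univ.filter (fun x : σ → ZMod p => (univ.filter fun i => x i ≠ 0) = S), eval x F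
        = ∑ x ∈ univ.filter (fun x : σ → ZMod p => (univ.filter fun i => x i ≠ 0) = S),
            (if (∑ i ∈ S, a i) = 0 ∧ p ∣ S.card
             then ((S.card.choose (j * p) : ℕ) : ZMod p) else 0) := by
          refine Finset.sum_congr rfl fun x hx => ?_
          rw [heval x, (mem_filter.mp hx).2]
      _ = ((p-1)^S.card : ℕ) •
            (if (∑ i ∈ S, a i) = 0 ∧ p ∣ S.card
             then ((S.card.choose (j * p) : ℕ) : ZMod p) else 0) := by
          rw [Finset.sum_const, card_supp_fiber]
      _ = _ := by
          rw [nsmul_eq_mul]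
          have hcast : (((p-1)^S.card : ℕ) : ZMod p) = (-1 : ZMod p) ^ S.card := by
            rw [Nat.cast_pow, Nat.cast_sub (by omega : 1 ≤ p), ZMod.natCast_self, Nat.cast_one,
              zero_sub]
          rw [hcast, mul_ite, mul_zero]
  rw [← hgroup, hsum0]

end KL2
section Transfer

open Finset

variable {p : ℕ} [hpf : Fact p.Prime] {n : ℕ}

lemma TL (a : Fin n → Fin 3 → ZMod p) (M : Finset (Fin n)) (j : ℕ)
    (hdeg : j * p + 4 * (p - 1) < M.card) :
    ∑ S ∈ M.powerset, (if (∑ i ∈ S, a i) = 0 ∧ p ∣ S.card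
      then ((-1 : ZMod p)) ^ S.card * ((S.card.choose (j * p) : ℕ) : ZMod p) else 0) = 0 := by
  classical
  have hKL := KL (σ := {i : Fin n // i ∈ M}) (fun i => a i.val) j (by rwa [Fintype.card_coe])
  refine Eq.trans ?_ hKL
  refine (Finset.sum_bij' (fun (T : Finset (Fin n)) (hT : T ∈ M.powerset) =>
      T.subtype (· ∈ M))
    (fun (S : Finset {i : Fin n // i ∈ M}) (hS : S ∈ (univ : Finset (Finset {i : Fin n // i ∈ M}))) =>
      S.map (Function.Embedding.subtype _)) ?_ ?_ ?_ ?_ ?_)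
  · intro T hT
    exact mem_univ _
  · intro S _
    rw [mem_powerset]
    intro x hx
    obtain ⟨y, _, rfl⟩ := Finset.mem_map.mp hx
    exact y.2
  · intro T hT
    show (T.subtype (· ∈ M)).map (Function.Embedding.subtype _) = T
    rw [Finset.subtype_map]
    exact Finset.filter_true_of_mem (fun x hx => (mem_powerset.mp hT) hx)
  · intro S _
    ext y
    simp [Finset.mem_subtype, Finset.mem_map, Function.Embedding.subtype]
    constructor
    · rintro ⟨a, b, h1, h2⟩
      have : (⟨a, b⟩ : ↥M) = y := Subtype.ext h2
      rwa [← this]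
    · intro hy
      exact ⟨y.1, y.2, hy, rfl⟩
  · intro T hT
    have hcard : (T.subtype (· ∈ M)).card = T.card := by
      rw [Finset.card_subtype, Finset.filter_true_of_mem (fun x hx => (mem_powerset.mp hT) hx)]
    have hsum : (∑ i ∈ T.subtype (· ∈ M), a i.val) = ∑ i ∈ T, a i :=
      Finset.sum_subtype_of_mem a (fun x hx => (mem_powerset.mp hT) hx)
    simp only [hcard, hsum]

lemma classes (a : Fin n → Fin 3 → ZMod p) (M : Finset (Fin n)) (fv : ℕ → ZMod p) (D : Finset ℕ)
    (hD : ∀ S ∈ M.powerset, ((∑ i ∈ S, a i) = 0 ∧ p ∣ S.card) → S.card ∈ D) :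
    ∑ S ∈ M.powerset, (if ((∑ i ∈ S, a i) = 0 ∧ p ∣ S.card) then fv S.card else 0)
      = ∑ d ∈ D, ((M.powerset.filter fun S =>
          ((∑ i ∈ S, a i) = 0 ∧ p ∣ S.card) ∧ S.card = d).card : ZMod p) * fv d := by
  classical
  rw [← Finset.sum_filter]
  rw [← Finset.sum_fiberwise_of_maps_to (g := Finset.card)
      (fun S hS => hD S (mem_filter.mp hS).1 (mem_filter.mp hS).2)]
  refine Finset.sum_congr rfl fun d _ => ?_
  rw [Finset.filter_filter]
  calc ∑ S ∈ M.powerset.filter fun S => (((∑ i ∈ S, a i) = 0 ∧ p ∣ S.card) ∧ S.card = d), fv S.card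
      = ∑ S ∈ M.powerset.filter fun S => (((∑ i ∈ S, a i) = 0 ∧ p ∣ S.card) ∧ S.card = d), fv d :=
        Finset.sum_congr rfl fun S hS => by rw [((mem_filter.mp hS).2).2]
    _ = _ := by rw [Finset.sum_const, nsmul_eq_mul]

lemma Ncl_zero (a : Fin n → Fin 3 → ZMod p) (M : Finset (Fin n)) :
    (M.powerset.filter fun S => ((∑ i ∈ S, a i) = 0 ∧ p ∣ S.card) ∧ S.card = 0).card = 1 := by
  classical
  have : (M.powerset.filter fun S => ((∑ i ∈ S, a i) = 0 ∧ p ∣ S.card) ∧ S.card = 0)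
      = {∅} := by
    ext S
    simp only [mem_filter, mem_powerset, Finset.mem_singleton, Finset.card_eq_zero]
    constructor
    · tauto
    · rintro rfl
      simp
  rw [this, Finset.card_singleton]

lemma Ncl_absent (a : Fin n → Fin 3 → ZMod p) (M : Finset (Fin n)) (d : ℕ)
    (h : ∀ S, S ⊆ M → (∑ i ∈ S, a i) = 0 → S.card ≠ d) :
    (M.powerset.filter fun S => ((∑ i ∈ S, a i) = 0 ∧ p ∣ S.card) ∧ S.card = d).card = 0 := by
  classical
  rw [Finset.card_eq_zero, Finset.filter_eq_empty_iff]
  intro S hS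
  rintro ⟨⟨hsum, _⟩, hcard⟩
  exact h S (mem_powerset.mp hS) hsum hcard

lemma Ncl_wit (a : Fin n → Fin 3 → ZMod p) (M : Finset (Fin n)) (d : ℕ)
    (h : (M.powerset.filter fun S => ((∑ i ∈ S, a i) = 0 ∧ p ∣ S.card) ∧ S.card = d).card ≠ 0) :
    ∃ S, S ⊆ M ∧ (∑ i ∈ S, a i) = 0 ∧ S.card = d := by
  classical
  obtain ⟨S, hS⟩ := Finset.card_ne_zero.mp h
  have := Finset.mem_filter.mp hS
  exact ⟨S, Finset.mem_powerset.mp this.1, this.2.1.1, this.2.2⟩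

lemma Ncl_top (a : Fin n → Fin 3 → ZMod p) (M : Finset (Fin n))
    (hsum : (∑ i ∈ M, a i) = 0) (hd : p ∣ M.card) :
    (M.powerset.filter fun S => ((∑ i ∈ S, a i) = 0 ∧ p ∣ S.card) ∧ S.card = M.card).card = 1 := by
  classical
  have : (M.powerset.filter fun S => ((∑ i ∈ S, a i) = 0 ∧ p ∣ S.card) ∧ S.card = M.card)
      = {M} := by
    ext S
    simp only [mem_filter, mem_powerset, Finset.mem_singleton]
    constructor
    · rintro ⟨hSM, _, hcard⟩
      exact Finset.eq_of_subset_of_card_le hSM (le_of_eq hcard.symm)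
    · rintro rfl
      exact ⟨Finset.Subset.refl _, ⟨hsum, hd⟩, rfl⟩
  rw [this, Finset.card_singleton]

end Transfer
section MainProof

open Finset

variable {p : ℕ} [hpf : Fact p.Prime] {n : ℕ}

lemma extract (a : Fin n → Fin 3 → ZMod p) (M : Finset (Fin n)) (hM : M.card = 4 * p - 3) :
    ∃ S, S ⊆ M ∧ (∑ i ∈ S, a i) = 0 ∧ (S.card = p ∨ S.card = 2 * p ∨ S.card = 3 * p) := by
  classical
  have hp2 := hpf.out.two_le
  by_contra hno
  push_neg at hno
  have h0 := TL a M 0 (by omega)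
  rw [Finset.sum_eq_single_of_mem ∅ (Finset.empty_mem_powerset M) ?_] at h0
  · simp at h0
  · intro S hS hSne
    rw [if_neg]
    rintro ⟨hsum, k, hk⟩
    have hSM := mem_powerset.mp hS
    have hcle : S.card ≤ 4 * p - 3 := hM ▸ card_le_card hSM
    have hne0 : S.card ≠ 0 := fun h => hSne (Finset.card_eq_zero.mp h)
    have hk3 : k ≤ 3 := by
      by_contra hk4
      push_neg at hk4
      have : p * 4 ≤ p * k := Nat.mul_le_mul_left p hk4
      omega
    obtain ⟨h1, h2, h3⟩ := hno S hSM hsum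
    interval_cases k <;> omega

theorem key (hn : n = 7 * p - 3) (a : Fin n → Fin 3 → ZMod p) :
    ∃ S : Finset (Fin n), S.card = 3 * p ∧ (∑ i ∈ S, a i) = 0 := by
  classical
  have hp := hpf.out
  have hp2 := hp.two_le
  by_contra hcon
  push_neg at hcon
  have hno3 : ∀ S : Finset (Fin n), (∑ i ∈ S, a i) = 0 → S.card ≠ 3 * p :=
    fun S hs hc => hcon S hc hs
  have hcardu : (univ : Finset (Fin n)).card = 7 * p - 3 := by
    rw [Finset.card_univ, Fintype.card_fin, hn]
  -- Step A : no zero-sum subset of size p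
  have noP : ∀ S : Finset (Fin n), (∑ i ∈ S, a i) = 0 → S.card ≠ p := by
    intro S1 hS1sum hS1card
    have hc1 : ((univ : Finset (Fin n)) \ S1).card = 6 * p - 3 := by
      rw [Finset.card_sdiff_of_subset (subset_univ _), hcardu, hS1card]; omega
    obtain ⟨M, hMsub, hMcard⟩ := Finset.exists_subset_card_eq
        (show 4 * p - 3 ≤ ((univ : Finset (Fin n)) \ S1).card by omega)
    obtain ⟨S2, hS2M, hS2sum, hS2card⟩ := extract a M hMcard
    have hd12 : Disjoint S1 S2 := Finset.disjoint_left.mpr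
      (fun x hx1 hx2 => (Finset.mem_sdiff.mp (hMsub (hS2M hx2))).2 hx1)
    rcases hS2card with h|h|h
    · -- S2 has size p; extract a third piece
      have hu12 : (S1 ∪ S2).card = 2 * p := by
        rw [Finset.card_union_of_disjoint hd12]; omega
      have hc2 : ((univ : Finset (Fin n)) \ (S1 ∪ S2)).card = 5 * p - 3 := by
        rw [Finset.card_sdiff_of_subset (subset_univ _), hcardu, hu12]; omega
      obtain ⟨M', hM'sub, hM'card⟩ := Finset.exists_subset_card_eq
          (show 4 * p - 3 ≤ ((univ : Finset (Fin n)) \ (S1 ∪ S2)).card by omega)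
      obtain ⟨S3, hS3M, hS3sum, hS3card⟩ := extract a M' hM'card
      have hd13 : Disjoint S1 S3 := Finset.disjoint_left.mpr (fun x hx1 hx3 =>
        (Finset.mem_sdiff.mp (hM'sub (hS3M hx3))).2 (Finset.mem_union_left _ hx1))
      have hd23 : Disjoint S2 S3 := Finset.disjoint_left.mpr (fun x hx2 hx3 =>
        (Finset.mem_sdiff.mp (hM'sub (hS3M hx3))).2 (Finset.mem_union_right _ hx2))
      have hd123 : Disjoint (S1 ∪ S2) S3 := Finset.disjoint_union_left.mpr ⟨hd13, hd23⟩
      rcases hS3card with h3|h3|h3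
      · refine hno3 ((S1 ∪ S2) ∪ S3) ?_ ?_
        · rw [Finset.sum_union hd123, Finset.sum_union hd12, hS1sum, hS2sum, hS3sum]
          simp
        · rw [Finset.card_union_of_disjoint hd123, hu12]; omega
      · refine hno3 (S1 ∪ S3) ?_ ?_
        · rw [Finset.sum_union hd13, hS1sum, hS3sum]; simp
        · rw [Finset.card_union_of_disjoint hd13]; omega
      · exact hno3 S3 hS3sum h3
    · refine hno3 (S1 ∪ S2) ?_ ?_
      · rw [Finset.sum_union hd12, hS1sum, hS2sum]; simp
      · rw [Finset.card_union_of_disjoint hd12]; omega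
    · exact hno3 S2 hS2sum h
  -- Case p = 2
  by_cases hp2' : p = 2
  · subst hp2'
    have hinj : Function.Injective a := by
      intro i j hij
      by_contra hne
      refine noP {i, j} ?_ ?_
      · rw [Finset.sum_insert (by simp [hne]), Finset.sum_singleton, hij]
        funext c
        simp only [Pi.add_apply, Pi.zero_apply]
        exact CharTwo.add_self_eq_zero _
      · rw [Finset.card_insert_of_notMem (by simp [hne]), Finset.card_singleton]
    have hle := Fintype.card_le_of_injective a hinj
    rw [Fintype.card_fin, Fintype.card_fun, ZMod.card, Fintype.card_fin] at hle
    omega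
  have hp3 : 3 ≤ p := by
    have := hp.two_le
    omega
  -- binomial values
  have heven2 : ((-1 : ZMod p))^(2*p) = 1 := Even.neg_one_pow ⟨p, two_mul p⟩
  have heven4 : ((-1 : ZMod p))^(4*p) = 1 := Even.neg_one_pow ⟨2*p, by ring⟩
  have heven6 : ((-1 : ZMod p))^(6*p) = 1 := Even.neg_one_pow ⟨3*p, by ring⟩
  have hch2p1 : (((2*p).choose p : ℕ) : ZMod p) = 2 := by
    have h := lucas_kp (p := p) 2 1
    rw [one_mul] at h
    rw [h]; norm_num
  have hch4p1 : (((4*p).choose p : ℕ) : ZMod p) = 4 := by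
    have h := lucas_kp (p := p) 4 1
    rw [one_mul] at h
    rw [h, show Nat.choose 4 1 = 4 from rfl]; norm_num
  have hch6p1 : (((6*p).choose p : ℕ) : ZMod p) = 6 := by
    have h := lucas_kp (p := p) 6 1
    rw [one_mul] at h
    rw [h, show Nat.choose 6 1 = 6 from rfl]; norm_num
  have hch2p2 : (((2*p).choose (2*p) : ℕ) : ZMod p) = 1 := by
    rw [Nat.choose_self]; norm_num
  have hch4p2 : (((4*p).choose (2*p) : ℕ) : ZMod p) = 6 := by
    rw [lucas_kp, show Nat.choose 4 2 = 6 from rfl]; norm_num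
  have hch6p2 : (((6*p).choose (2*p) : ℕ) : ZMod p) = 15 := by
    rw [lucas_kp, show Nat.choose 6 2 = 15 from rfl]; norm_num
  have hch0p : Nat.choose 0 p = 0 := Nat.choose_eq_zero_of_lt (by omega)
  have hch02p : Nat.choose 0 (2*p) = 0 := Nat.choose_eq_zero_of_lt (by omega)
  -- Step B : no zero-sum subset of size 2p
  have no2P : ∀ T : Finset (Fin n), (∑ i ∈ T, a i) = 0 → T.card ≠ 2 * p := by
    intro T hTsum hTcard
    have hMcard : ((univ : Finset (Fin n)) \ T).card = 5 * p - 3 := by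
      rw [Finset.card_sdiff_of_subset (subset_univ _), hcardu, hTcard]; omega
    set M : Finset (Fin n) := (univ : Finset (Fin n)) \ T with hMdef
    have hD : ∀ S ∈ M.powerset, ((∑ i ∈ S, a i) = 0 ∧ p ∣ S.card) →
        S.card ∈ ({0, 2*p, 4*p} : Finset ℕ) := by
      rintro S hS ⟨hsum, k, hk⟩
      have hle : S.card ≤ 5*p - 3 := hMcard ▸ card_le_card (mem_powerset.mp hS)
      have hk4 : k ≤ 4 := by
        by_contra hh
        push_neg at hh
        have : p * 5 ≤ p * k := Nat.mul_le_mul_left p hh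
        omega
      have h1 := noP S hsum
      have h3 := hno3 S hsum
      simp only [Finset.mem_insert, Finset.mem_singleton]
      interval_cases k <;> omega
    have hc0 := classes a M (fun d => ((-1 : ZMod p))^d * ((d.choose (0*p) : ℕ) : ZMod p))
      ({0, 2*p, 4*p} : Finset ℕ) hD
    have hc1 := classes a M (fun d => ((-1 : ZMod p))^d * ((d.choose (1*p) : ℕ) : ZMod p))
      ({0, 2*p, 4*p} : Finset ℕ) hD
    have e0 := hc0.symm.trans (TL a M 0 (by omega))
    have e1 := hc1.symm.trans (TL a M 1 (by omega))
    rw [Finset.sum_insert (by simp; omega), Finset.sum_insert (by simp; omega),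
      Finset.sum_singleton, Ncl_zero a M] at e0 e1
    simp only [Nat.zero_mul, Nat.choose_zero_right, Nat.cast_one, mul_one, pow_zero, one_mul,
      heven2, heven4, hch2p1, hch4p1, hch0p, Nat.cast_zero, mul_zero, zero_mul] at e0 e1
    set A := (M.powerset.filter fun S =>
        ((∑ i ∈ S, a i) = 0 ∧ p ∣ S.card) ∧ S.card = 2*p).card with hAdef
    set B := (M.powerset.filter fun S =>
        ((∑ i ∈ S, a i) = 0 ∧ p ∣ S.card) ∧ S.card = 4*p).card with hBdef
    have hBne : B ≠ 0 := by
      intro hB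
      rw [hB] at e0 e1
      have h2z : (2 : ZMod p) = 0 := by
        push_cast at e0 e1
        linear_combination 2*e0 - e1
      have : (p : ℕ) ∣ 2 := by
        have : ((2 : ℕ) : ZMod p) = 0 := by exact_mod_cast h2z
        exact (ZMod.natCast_eq_zero_iff 2 p).mp this
      have := Nat.le_of_dvd (by norm_num) this
      omega
    obtain ⟨W, hWsub, hWsum, hWcard⟩ := Ncl_wit a M (4*p) (by rw [← hBdef]; exact hBne)
    have hdTW : Disjoint T W := Finset.disjoint_left.mpr
      (fun x hxT hxW => (Finset.mem_sdiff.mp (hWsub hxW)).2 hxT)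
    set V : Finset (Fin n) := T ∪ W with hVdef
    have hVsum : (∑ i ∈ V, a i) = 0 := by
      rw [hVdef, Finset.sum_union hdTW, hTsum, hWsum, add_zero]
    have hVcard : V.card = 6*p := by
      rw [hVdef, Finset.card_union_of_disjoint hdTW, hTcard, hWcard]; ring
    have hD' : ∀ S ∈ V.powerset, ((∑ i ∈ S, a i) = 0 ∧ p ∣ S.card) →
        S.card ∈ ({0, 2*p, 4*p, 6*p} : Finset ℕ) := by
      rintro S hS ⟨hsum, k, hk⟩
      have hSV := mem_powerset.mp hS
      have hle : S.card ≤ 6*p := hVcard ▸ card_le_card hSV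
      have hk6 : k ≤ 6 := by
        by_contra hh
        push_neg at hh
        have : p * 7 ≤ p * k := Nat.mul_le_mul_left p hh
        omega
      have h1 := noP S hsum
      have h3 := hno3 S hsum
      have h5 : S.card ≠ 5*p := by
        intro h5c
        refine noP (V \ S) ?_ ?_
        · rw [Finset.sum_sdiff_eq_sub hSV, hVsum, hsum, sub_zero]
        · rw [Finset.card_sdiff_of_subset hSV, hVcard, h5c]; omega
      simp only [Finset.mem_insert, Finset.mem_singleton]
      interval_cases k <;> omega
    have hc0' := classes a V (fun d => ((-1 : ZMod p))^d * ((d.choose (0*p) : ℕ) : ZMod p))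
      ({0, 2*p, 4*p, 6*p} : Finset ℕ) hD'
    have hc1' := classes a V (fun d => ((-1 : ZMod p))^d * ((d.choose (1*p) : ℕ) : ZMod p))
      ({0, 2*p, 4*p, 6*p} : Finset ℕ) hD'
    have hc2' := classes a V (fun d => ((-1 : ZMod p))^d * ((d.choose (2*p) : ℕ) : ZMod p))
      ({0, 2*p, 4*p, 6*p} : Finset ℕ) hD'
    have f0 := hc0'.symm.trans (TL a V 0 (by omega))
    have f1 := hc1'.symm.trans (TL a V 1 (by omega))
    have f2 := hc2'.symm.trans (TL a V 2 (by omega))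
    have htop : (V.powerset.filter fun S =>
        ((∑ i ∈ S, a i) = 0 ∧ p ∣ S.card) ∧ S.card = 6*p).card = 1 := by
      have h := Ncl_top a V hVsum (by rw [hVcard]; exact ⟨6, by ring⟩)
      rwa [hVcard] at h
    rw [Finset.sum_insert (by simp; omega), Finset.sum_insert (by simp; omega),
      Finset.sum_insert (by simp; omega), Finset.sum_singleton, Ncl_zero a V, htop]
      at f0 f1 f2
    simp only [Nat.zero_mul, Nat.choose_zero_right, Nat.cast_one, mul_one, pow_zero, one_mul,
      heven2, heven4, heven6, hch2p1, hch4p1, hch6p1, hch2p2, hch4p2, hch6p2,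
      hch0p, hch02p, Nat.cast_zero, mul_zero, zero_mul] at f0 f1 f2
    have h16 : ((16 : ℕ) : ZMod p) = 0 := by
      push_cast at f0 f1 f2 ⊢
      linear_combination 8*f0 - 5*f1 + 2*f2
    have hdvd : (p : ℕ) ∣ 16 := (ZMod.natCast_eq_zero_iff 16 p).mp h16
    have h24 : (2 : ℕ)^4 = 16 := by norm_num
    have hdvd2 : (p : ℕ) ∣ 2 := hp.dvd_of_dvd_pow (h24 ▸ hdvd)
    have := Nat.le_of_dvd (by norm_num) hdvd2
    omega
  -- Final contradiction
  obtain ⟨M, hMsub, hMcard⟩ := Finset.exists_subset_card_eq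
      (show 4 * p - 3 ≤ (univ : Finset (Fin n)).card by omega)
  obtain ⟨S, _, hSsum, hScard⟩ := extract a M hMcard
  rcases hScard with h|h|h
  · exact noP S hSsum h
  · exact no2P S hSsum h
  · exact hno3 S hSsum h

end MainProof

theorem stmt_1 (p : ℕ) (hp : p.Prime) (J : Multiset (Fin 3 → ZMod p))
    (hJ : Multiset.card J = 7 * p - 3) :
    ∃ T ≤ J, Multiset.card T = 3 * p ∧ T.sum = 0 := by
  classical
  haveI : Fact p.Prime := ⟨hp⟩
  obtain ⟨l, rfl⟩ : ∃ l : List (Fin 3 → ZMod p), J = ↑l :=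
    ⟨J.toList, (Multiset.coe_toList J).symm⟩
  have hlen : l.length = 7 * p - 3 := by simpa using hJ
  obtain ⟨S, hScard, hSsum⟩ := key (p := p) hlen l.get
  refine ⟨S.val.map l.get, ?_, ?_, ?_⟩
  · have hsub : S.val ≤ (Finset.univ : Finset (Fin l.length)).val :=
      Finset.val_le_iff.mpr (Finset.subset_univ S)
    have humap : (Finset.univ : Finset (Fin l.length)).val.map l.get = (l : Multiset _) := by
      have h := List.map_get_finRange l
      calc (Finset.univ : Finset (Fin l.length)).val.map l.get
          = ((List.finRange l.length : Multiset (Fin l.length))).map l.get := rfl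
        _ = ((List.finRange l.length).map l.get : List _) := by rw [Multiset.map_coe]
        _ = (l : Multiset _) := by rw [h]
    calc S.val.map l.get ≤ (Finset.univ : Finset (Fin l.length)).val.map l.get :=
          Multiset.map_le_map hsub
      _ = _ := humap
  · rw [Multiset.card_map]
    exact hScard
  · exact hSsum
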